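/- Let H = [[A,B],[C,D]] ∈ M_N({±1}) be Hadamard with A ∈ M_r({±1}) itself a Hadamard matrix and N > r(r−1)². Then D is an almost Hadamard sign pattern: writing Pol(D) = (1/√N)(D − E), every entry of E has absolute value strictly less than 1, so sgn(Pol(D)_{ij}) = D_{ij} for all i, j; moreover Pol(D)·Dᵗ > 0 (positive definite). -/

import Mathlib

open Matrix

section

open scoped ComplexOrder

/-- The positive semidefinite square root of a positive semidefinite matrix
(the definition `Matrix.PosSemidef.sqrt` of the older Mathlib, since removed). -/
noncomputable def Matrix.PosSemidef.sqrt {n 𝕜 : Type*} [Fintype n] [DecidableEq n] [RCLike 𝕜]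
    {A : Matrix n n 𝕜} (hA : A.PosSemidef) : Matrix n n 𝕜 :=
  hA.1.eigenvectorUnitary.1 * diagonal ((↑) ∘ (√·) ∘ hA.1.eigenvalues) *
  (star hA.1.eigenvectorUnitary : Matrix n n 𝕜)

end

open scoped MatrixOrder in
private lemma sqrt_eq_of_mul_self {n : Type*} [Fintype n] [DecidableEq n] {A S : Matrix n n ℝ}
    (hA : A.PosSemidef) (hS : S.PosSemidef) (h : S * S = A) : hA.sqrt = S := by
  have h1 : hA.sqrt = cfc Real.sqrt A := by
    rw [hA.1.cfc_eq, Matrix.IsHermitian.cfc, Unitary.conjStarAlgAut_apply]; rfl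
  have h2 : cfc Real.sqrt A = CFC.sqrt A := by
    rw [CFC.sqrt_eq_cfc, cfc_nnreal_eq_real _ A]
    refine cfc_congr fun x hx => ?_
    have hx0 : 0 ≤ x := spectrum_nonneg_of_nonneg hA.nonneg hx
    rw [Real.coe_sqrt, Real.coe_toNNReal _ hx0]
  rw [h1, h2]
  exact CFC.sqrt_unique h hS.nonneg

private lemma psd_smul {n : Type*} [Fintype n] {M : Matrix n n ℝ} (h : M.PosSemidef)
    {a : ℝ} (ha : 0 ≤ a) : (a • M).PosSemidef := by
  refine Matrix.PosSemidef.of_dotProduct_mulVec_nonneg ?_ fun x => ?_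
  · show (a • M)ᴴ = a • M
    rw [conjTranspose_smul, h.1]; simp
  · rw [smul_mulVec, dotProduct_smul, smul_eq_mul]
    exact mul_nonneg ha (h.dotProduct_mulVec_nonneg x)

private lemma pd_smul {n : Type*} [Fintype n] {M : Matrix n n ℝ} (h : M.PosDef)
    {a : ℝ} (ha : 0 < a) : (a • M).PosDef := by
  refine Matrix.PosDef.of_dotProduct_mulVec_pos ?_ fun x hx => ?_
  · show (a • M)ᴴ = a • M
    rw [conjTranspose_smul, h.1]; simp
  · rw [smul_mulVec, dotProduct_smul, smul_eq_mul]
    exact mul_pos ha (h.dotProduct_mulVec_pos hx)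

set_option maxHeartbeats 1000000 in
/-- Let `H = [[A,B],[C,D]] ∈ M_N(±1)` be Hadamard with `A ∈ M_r(±1)` itself a
Hadamard matrix and `N > r(r−1)²`. Then `D` is an almost Hadamard sign
pattern: writing `Pol(D) = (1/√N)(D − E)`, i.e. `E = D − √N·Pol(D)`, every
entry of `E` has absolute value `< 1`, so `sgn(Pol(D)ᵢⱼ) = Dᵢⱼ` for all `i, j`;
moreover `Pol(D)·Dᵗ` is positive definite. -/
theorem stmt_15 (N r d : ℕ) (hN : N = r + d) (hNr : N > r * (r - 1) ^ 2)
    (A : Matrix (Fin r) (Fin r) ℝ) (B : Matrix (Fin r) (Fin d) ℝ)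
    (C : Matrix (Fin d) (Fin r) ℝ) (D : Matrix (Fin d) (Fin d) ℝ)
    (hsign : ∀ i j, Matrix.fromBlocks A B C D i j = 1 ∨
      Matrix.fromBlocks A B C D i j = -1)
    (hH : Matrix.fromBlocks A B C D * (Matrix.fromBlocks A B C D)ᵀ
      = (N : ℝ) • 1)
    (hAHad : A * Aᵀ = (r : ℝ) • 1)
    (PD : Matrix (Fin d) (Fin d) ℝ) (hPD : PDᵀ * PD = 1)
    (hPDpol : D = PD * (Matrix.posSemidef_conjTranspose_mul_self D).sqrt) :
    (∀ i j, |(D - Real.sqrt N • PD) i j| < 1) ∧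
      (∀ i j, Real.sign (PD i j) = D i j) ∧ (PD * Dᵀ).PosDef := by
  rcases Nat.eq_zero_or_pos d with hd0 | hdpos
  · subst hd0
    exact ⟨fun i => i.elim0, fun i => i.elim0,
      ⟨by ext i j; exact i.elim0, fun x hx => absurd (Subsingleton.elim _ _) hx⟩⟩
  -- entry facts
  have hBabs : ∀ l j, |B l j| = 1 := fun l j => by
    rcases hsign (Sum.inl l) (Sum.inr j) with h | h <;>
      simp only [Matrix.fromBlocks_apply₁₂] at h <;> rw [h] <;> norm_num
  have hCabs : ∀ i k, |C i k| = 1 := fun i k => by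
    rcases hsign (Sum.inr i) (Sum.inl k) with h | h <;>
      simp only [Matrix.fromBlocks_apply₂₁] at h <;> rw [h] <;> norm_num
  have hAabs : ∀ l k, |A l k| = 1 := fun l k => by
    rcases hsign (Sum.inl l) (Sum.inl k) with h | h <;>
      simp only [Matrix.fromBlocks_apply₁₁] at h <;> rw [h] <;> norm_num
  have hDpm : ∀ i j, D i j = 1 ∨ D i j = -1 := fun i j => by
    have := hsign (Sum.inr i) (Sum.inr j)
    simpa using this
  have hN0 : 0 < N := by omega
  have hNne : ((N:ℝ)) ≠ 0 := Nat.cast_ne_zero.mpr (by omega)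
  -- block equations
  set M := Matrix.fromBlocks A B C D with hM_def
  have hMtM : Mᵀ * M = (N:ℝ) • (1 : Matrix (Fin r ⊕ Fin d) (Fin r ⊕ Fin d) ℝ) := by
    have h1 : M * ((N:ℝ)⁻¹ • Mᵀ) = 1 := by
      rw [Matrix.mul_smul, hH, smul_smul, inv_mul_cancel₀ hNne, one_smul]
    have h2 := mul_eq_one_comm.mp h1
    calc Mᵀ * M = (N:ℝ) • (((N:ℝ)⁻¹ • Mᵀ) * M) := by
          rw [Matrix.smul_mul, smul_smul, mul_inv_cancel₀ hNne, one_smul]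
      _ = (N:ℝ) • 1 := by rw [h2]
  have hb1 : Matrix.fromBlocks (A*Aᵀ + B*Bᵀ) (A*Cᵀ + B*Dᵀ) (C*Aᵀ + D*Bᵀ) (C*Cᵀ + D*Dᵀ)
      = Matrix.fromBlocks ((N:ℝ)•1) ((N:ℝ)•0) ((N:ℝ)•0) ((N:ℝ)•1) := by
    calc Matrix.fromBlocks (A*Aᵀ + B*Bᵀ) (A*Cᵀ + B*Dᵀ) (C*Aᵀ + D*Bᵀ) (C*Cᵀ + D*Dᵀ)
        = M * Mᵀ := by rw [hM_def, fromBlocks_transpose, fromBlocks_multiply]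
      _ = (N:ℝ) • 1 := hH
      _ = _ := by rw [← fromBlocks_one, Matrix.fromBlocks_smul]
  have hb2 : Matrix.fromBlocks (Aᵀ*A + Cᵀ*C) (Aᵀ*B + Cᵀ*D) (Bᵀ*A + Dᵀ*C) (Bᵀ*B + Dᵀ*D)
      = Matrix.fromBlocks ((N:ℝ)•1) ((N:ℝ)•0) ((N:ℝ)•0) ((N:ℝ)•1) := by
    calc Matrix.fromBlocks (Aᵀ*A + Cᵀ*C) (Aᵀ*B + Cᵀ*D) (Bᵀ*A + Dᵀ*C) (Bᵀ*B + Dᵀ*D)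
        = Mᵀ * M := by rw [hM_def, fromBlocks_transpose, fromBlocks_multiply]
      _ = (N:ℝ) • 1 := hMtM
      _ = _ := by rw [← fromBlocks_one, Matrix.fromBlocks_smul]
  have h11 : A*Aᵀ + B*Bᵀ = (N:ℝ)•1 := (Matrix.fromBlocks_inj.mp hb1).1
  have h21 : C*Aᵀ + D*Bᵀ = 0 := by
    have := (Matrix.fromBlocks_inj.mp hb1).2.2.1
    simpa using this
  have h22' : Bᵀ*B + Dᵀ*D = (N:ℝ)•1 := (Matrix.fromBlocks_inj.mp hb2).2.2.2
  have hBBt : B*Bᵀ = ((N:ℝ) - r)•1 := by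
    rw [sub_smul, ← hAHad, ← h11]; abel
  -- scalars
  set s : ℝ := Real.sqrt N with hs_def
  set t : ℝ := Real.sqrt r with ht_def
  have hs2 : s * s = N := Real.mul_self_sqrt (by positivity)
  have ht2 : t * t = r := Real.mul_self_sqrt (by positivity)
  have hspos : 0 < s := Real.sqrt_pos.mpr (by exact_mod_cast hN0)
  have htnn : 0 ≤ t := Real.sqrt_nonneg _
  have hts : t ≤ s := Real.sqrt_le_sqrt (by exact_mod_cast (by omega : r ≤ N))
  have hdR : ((N:ℝ)) - r = d := by rw [hN]; push_cast; ring
  have hdpos' : (0:ℝ) < d := by exact_mod_cast hdpos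
  clear_value s t
  set c : ℝ := (s - t) / d with hc_def
  have hcd : c * d = s - t := by rw [hc_def]; field_simp
  have hcnn : 0 ≤ c := div_nonneg (by linarith) (le_of_lt hdpos')
  have hstd : (s - t) * (s + t) = d := by nlinarith [hs2, ht2, hdR]
  have hcst : c * (s + t) = 1 := by
    rw [hc_def, div_mul_eq_mul_div, hstd, div_self (ne_of_gt hdpos')]
  clear hc_def
  clear_value c
  -- the matrix X = BᵀB and the square root S
  set X := Bᵀ * B with hX_def
  have hXt : Xᵀ = X := by rw [hX_def, transpose_mul, transpose_transpose]
  have hXX : X * X = (d:ℝ) • X := by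
    rw [hX_def, Matrix.mul_assoc, ← Matrix.mul_assoc B, hBBt, hdR]
    rw [Matrix.smul_mul, Matrix.one_mul, Matrix.mul_smul]
  have hXBt : X * Bᵀ = (d:ℝ) • Bᵀ := by
    rw [hX_def, Matrix.mul_assoc, hBBt, hdR, Matrix.mul_smul, Matrix.mul_one]
  have hX0 : r = 0 → X = 0 := by
    intro hr0
    rw [hX_def]
    ext i j
    rw [Matrix.mul_apply]
    subst hr0
    simp
  clear_value X
  set S := s • (1 : Matrix (Fin d) (Fin d) ℝ) - c • X with hS_def
  clear_value S
  have hSt : Sᵀ = S := by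
    rw [hS_def, transpose_sub, transpose_smul, transpose_smul, transpose_one, hXt]
  have hSS : S * S = (N:ℝ) • (1 : Matrix (Fin d) (Fin d) ℝ) - X := by
    rw [hS_def]
    simp only [Matrix.sub_mul, Matrix.mul_sub, Matrix.smul_mul, Matrix.mul_smul,
      Matrix.one_mul, Matrix.mul_one, hXX, smul_smul]
    match_scalars
    · linear_combination hs2
    · linear_combination c*hcd - hcst
  -- S is positive definite
  set R := (d:ℝ) • (1 : Matrix (Fin d) (Fin d) ℝ) - X with hR_def
  clear_value R
  have hRt : Rᵀ = R := by rw [hR_def, transpose_sub, transpose_smul, transpose_one, hXt]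
  have hRR : R * R = (d:ℝ) • R := by
    rw [hR_def]
    simp only [Matrix.sub_mul, Matrix.mul_sub, Matrix.smul_mul, Matrix.mul_smul,
      Matrix.one_mul, Matrix.mul_one, hXX, smul_smul]
    match_scalars <;> ring
  have hRpsd : R.PosSemidef := by
    have hre : R = (d:ℝ)⁻¹ • (Rᵀ * R) := by
      rw [hRt, hRR, smul_smul, inv_mul_cancel₀ (ne_of_gt hdpos'), one_smul]
    rw [hre]
    exact psd_smul (Matrix.posSemidef_conjTranspose_mul_self R) (by positivity)
  have hSalt : S = t • (1 : Matrix (Fin d) (Fin d) ℝ) + c • R := by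
    rw [hS_def, hR_def, smul_sub, smul_smul]
    match_scalars
    · linear_combination -hcd
    · ring
  have hSpd : S.PosDef := by
    by_cases hr0 : r = 0
    · rw [hS_def, hX0 hr0, smul_zero, sub_zero]
      exact pd_smul Matrix.PosDef.one hspos
    · have htpos : 0 < t := by
        rw [ht_def]
        exact Real.sqrt_pos.mpr (by exact_mod_cast Nat.pos_of_ne_zero hr0)
      rw [hSalt]
      exact (pd_smul Matrix.PosDef.one htpos).add_posSemidef (psd_smul hRpsd hcnn)
  -- identify the square root
  have hDtD : Dᵀ * D = (N:ℝ) • 1 - X := by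
    rw [eq_sub_iff_add_eq, ← h22']; abel
  have hDH : Dᴴ = Dᵀ := by ext i j; simp [Matrix.conjTranspose_apply]
  have hsqrt : (Matrix.posSemidef_conjTranspose_mul_self D).sqrt = S :=
    (sqrt_eq_of_mul_self _ hSpd.posSemidef (by rw [hSS, hDH, hDtD]))
  have hD : D = PD * S := by rw [hPDpol, hsqrt]
  -- the error matrix
  have hEbound : ∀ i j, |(D - s • PD) i j| < 1 := by
    by_cases hr0 : r = 0
    · have hE0 : D - s • PD = 0 := by
        rw [hD, hS_def, hX0 hr0, smul_zero, sub_zero, Matrix.mul_smul, Matrix.mul_one,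
          sub_self]
      intro i j
      rw [hE0]
      norm_num
    · have hrpos : 0 < r := Nat.pos_of_ne_zero hr0
      have htpos : 0 < t := by
        rw [ht_def]
        exact Real.sqrt_pos.mpr (by exact_mod_cast hrpos)
      have hSBt : S * Bᵀ = t • Bᵀ := by
        rw [hS_def, Matrix.sub_mul, Matrix.smul_mul, Matrix.one_mul, Matrix.smul_mul,
          hXBt, smul_smul, hcd, ← sub_smul]
        congr 1
        ring
      have hDBt : D * Bᵀ = -(C * Aᵀ) := eq_neg_of_add_eq_zero_right h21
      have hPDBt : PD * Bᵀ = (-t⁻¹) • (C * Aᵀ) := by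
        have h3 : t • (PD * Bᵀ) = -(C * Aᵀ) := by
          rw [← Matrix.mul_smul, ← hSBt, ← Matrix.mul_assoc, ← hD, hDBt]
        calc PD * Bᵀ = t⁻¹ • (t • (PD * Bᵀ)) := by
              rw [smul_smul, inv_mul_cancel₀ (ne_of_gt htpos), one_smul]
          _ = (-t⁻¹) • (C * Aᵀ) := by rw [h3, smul_neg, neg_smul]
      have hE : D - s • PD = (c * t⁻¹) • (C * Aᵀ * B) := by
        calc D - s • PD = PD * (S - s • 1) := by
              rw [hD, Matrix.mul_sub, Matrix.mul_smul, Matrix.mul_one]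
          _ = PD * ((-c) • X) := by
              congr 1
              rw [hS_def, neg_smul]
              abel
          _ = (-c) • ((PD * Bᵀ) * B) := by
              rw [Matrix.mul_smul, hX_def, Matrix.mul_assoc]
          _ = (c * t⁻¹) • (C * Aᵀ * B) := by
              rw [hPDBt, Matrix.smul_mul, smul_smul, neg_mul_neg]
      -- numeric bound
      have hr1R : (1:ℝ) ≤ r := by exact_mod_cast hrpos
      have hNrR : (r:ℝ) * ((r:ℝ) - 1)^2 < (N:ℝ) := by
        have hcast : ((r - 1 : ℕ) : ℝ) = (r:ℝ) - 1 := by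
          have h := Nat.cast_sub (R := ℝ) (show 1 ≤ r by omega)
          simpa using h
        have h := hNr
        have h' : ((r * (r-1)^2 : ℕ) : ℝ) < ((N:ℕ) : ℝ) := by exact_mod_cast h
        push_cast at h'
        rw [hcast] at h'
        exact h'
      have hstpos : 0 < s + t := by linarith
      have h2 : (r:ℝ) * ((r:ℝ) - 1) < t * s := by
        have hts' : t * s = Real.sqrt ((r:ℝ) * N) := by
          rw [ht_def, hs_def, ← Real.sqrt_mul (Nat.cast_nonneg r)]
        rw [hts']
        refine (Real.lt_sqrt (mul_nonneg (Nat.cast_nonneg r) (by linarith))).mpr ?_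
        have hrposR : (0:ℝ) < r := by exact_mod_cast hrpos
        nlinarith [hNrR, hrposR]
      have hkey : (r:ℝ) * r < t * (s + t) := by nlinarith [h2, ht2]
      have hc_eq : c = (s + t)⁻¹ := eq_inv_of_mul_eq_one_left hcst
      intro i j
      rw [hE, Matrix.smul_apply, smul_eq_mul, abs_mul]
      have hCA : ∀ l, |(C * Aᵀ) i l| ≤ (r:ℝ) := by
        intro l
        rw [Matrix.mul_apply]
        calc |∑ k, C i k * Aᵀ k l| ≤ ∑ k, |C i k * Aᵀ k l| :=
              Finset.abs_sum_le_sum_abs _ _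
          _ ≤ ∑ _k : Fin r, (1:ℝ) := by
              refine Finset.sum_le_sum fun k _ => ?_
              rw [abs_mul, Matrix.transpose_apply, hCabs, hAabs]
              norm_num
          _ = r := by simp
      have hCAB : |(C * Aᵀ * B) i j| ≤ (r:ℝ) * r := by
        rw [Matrix.mul_apply]
        calc |∑ l, (C * Aᵀ) i l * B l j| ≤ ∑ l, |(C * Aᵀ) i l * B l j| :=
              Finset.abs_sum_le_sum_abs _ _
          _ ≤ ∑ _l : Fin r, (r:ℝ) := by
              refine Finset.sum_le_sum fun l _ => ?_
              rw [abs_mul, hBabs, mul_one]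
              exact hCA l
          _ = (r:ℝ) * r := by simp [mul_comm]
      have hctnn : 0 ≤ c * t⁻¹ := mul_nonneg hcnn (inv_nonneg.mpr htnn)
      have hfin : (c * t⁻¹) * ((r:ℝ) * r) < 1 := by
        rw [hc_eq]
        rw [show (s + t)⁻¹ * t⁻¹ * ((r:ℝ) * r) = ((r:ℝ) * r) / (t * (s + t)) by
          field_simp]
        exact (div_lt_one (mul_pos htpos hstpos)).mpr hkey
      calc |c * t⁻¹| * |(C * Aᵀ * B) i j| = (c * t⁻¹) * |(C * Aᵀ * B) i j| := by
            rw [abs_of_nonneg hctnn]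
        _ ≤ (c * t⁻¹) * ((r:ℝ) * r) := mul_le_mul_of_nonneg_left hCAB hctnn
        _ < 1 := hfin
  refine ⟨hEbound, ?_, ?_⟩
  · -- sign condition
    intro i j
    have hEij := hEbound i j
    have hPDval : s * PD i j = D i j - (D - s • PD) i j := by
      simp [Matrix.sub_apply, Matrix.smul_apply]
    rcases hDpm i j with h1 | h1
    · have hpos : 0 < PD i j := by
        have h2 : (D - s • PD) i j < 1 := (abs_lt.mp hEij).2
        nlinarith [hspos, hPDval]
      rw [Real.sign_of_pos hpos, h1]
    · have hneg : PD i j < 0 := by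
        have h2 : -1 < (D - s • PD) i j := (abs_lt.mp hEij).1
        nlinarith [hspos, hPDval]
      rw [Real.sign_of_neg hneg, h1]
  · -- positive definiteness of PD * Dᵀ
    have hPDPDt : PD * PDᵀ = 1 := mul_eq_one_comm.mp hPD
    have hPDDt : PD * Dᵀ = PD * S * PDᵀ := by
      rw [hD, Matrix.transpose_mul, hSt, ← Matrix.mul_assoc]
    rw [hPDDt]
    have hPDth : PDᵀᴴ = PD := by ext i j; simp [Matrix.conjTranspose_apply]
    have hSH : S.IsHermitian := by
      show Sᴴ = S
      have : Sᴴ = Sᵀ := by ext i j; simp [Matrix.conjTranspose_apply]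
      rw [this, hSt]
    refine Matrix.PosDef.of_dotProduct_mulVec_pos ?_ fun x hx => ?_
    · rw [show PD * S * PDᵀ = PDᵀᴴ * S * PDᵀ from by rw [hPDth]]
      exact Matrix.isHermitian_conjTranspose_mul_mul PDᵀ hSH
    · have hy : PDᵀ *ᵥ x ≠ 0 := by
        intro h0
        apply hx
        have hxx : PD *ᵥ (PDᵀ *ᵥ x) = PD *ᵥ 0 := by rw [h0]
        rwa [Matrix.mulVec_mulVec, hPDPDt, Matrix.one_mulVec, Matrix.mulVec_zero] at hxx
      rw [show PD * S * PDᵀ = PDᵀᴴ * S * PDᵀ from by rw [hPDth]]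
      simpa only [star_mulVec, dotProduct_mulVec, vecMul_vecMul]
        using hSpd.dotProduct_mulVec_pos hy
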